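/- There are exactly 6 triples (x, y, z) of positive integers satisfying x*y*z = x^2 + y + 1. -/
import Mathlib

theorem stmt3 :
    {p : ℕ × ℕ × ℕ | 0 < p.1 ∧ 0 < p.2.1 ∧ 0 < p.2.2 ∧
      p.1 * p.2.1 * p.2.2 = p.1 ^ 2 + p.2.1 + 1}.ncard = 6 := by
  have hset : {p : ℕ × ℕ × ℕ | 0 < p.1 ∧ 0 < p.2.1 ∧ 0 < p.2.2 ∧
      p.1 * p.2.1 * p.2.2 = p.1 ^ 2 + p.2.1 + 1} =
      ↑({(1,1,3),(1,2,2),(2,1,3),(2,5,1),(3,2,2),(3,5,1)} : Finset (ℕ × ℕ × ℕ)) := by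
    ext ⟨x, y, z⟩
    simp only [Set.mem_setOf_eq, Finset.coe_insert, Set.mem_insert_iff,
      Finset.coe_singleton, Set.mem_singleton_iff, Prod.mk.injEq]
    constructor
    · rintro ⟨hx, hy, hz, h⟩
      -- x divides y + 1
      have hdx : x ∣ y + 1 := by
        have h1 : x ∣ x * y * z := ⟨y * z, by ring⟩
        have h2 : x ∣ x ^ 2 := ⟨x, by ring⟩
        have h3 : x ∣ x ^ 2 + (y + 1) := by rw [← add_assoc, ← h]; exact h1
        exact (Nat.dvd_add_right h2).mp h3
      have hxy : x ≤ y + 1 := Nat.le_of_dvd (by omega) hdx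
      have hx3 : x ≤ 3 := by
        by_contra hc
        push_neg at hc
        obtain ⟨k, rfl⟩ : ∃ k, x = k + 4 := ⟨x - 4, by omega⟩
        rcases Nat.lt_or_ge z 2 with hz2 | hz2
        · -- z = 1
          have hz1 : z = 1 := by omega
          subst hz1
          have hkey : (k + 3) * y = (k + 4) ^ 2 + 1 := by nlinarith [h]
          have hd1 : k + 3 ∣ (k + 4) ^ 2 + 1 := ⟨y, hkey.symm⟩
          have hd2 : k + 3 ∣ (k + 3) * (k + 5) := ⟨k + 5, rfl⟩
          have hd3 : k + 3 ∣ 2 := by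
            have heq : (k + 4) ^ 2 + 1 - (k + 3) * (k + 5) = 2 := by ring_nf; omega
            have := Nat.dvd_sub hd1 hd2
            rwa [heq] at this
          have := Nat.le_of_dvd (by norm_num) hd3
          omega
        · -- z ≥ 2, y ≥ x - 1 = k + 3
          have hy2 : k + 3 ≤ y := by omega
          have h' : ((k:ℤ) + 4) * y * z = ((k:ℤ) + 4) ^ 2 + y + 1 := by exact_mod_cast h
          have hy2' : (k:ℤ) + 3 ≤ (y:ℤ) := by exact_mod_cast hy2
          have hz2' : (2:ℤ) ≤ (z:ℤ) := by exact_mod_cast hz2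
          have hk0 : (0:ℤ) ≤ (k:ℤ) := Int.natCast_nonneg k
          have p1 : (0:ℤ) ≤ ((y:ℤ) - ((k:ℤ) + 3)) * (((k:ℤ) + 4) * z - 1) :=
            mul_nonneg (by linarith) (by nlinarith)
          have p2 : (0:ℤ) ≤ ((k:ℤ) + 3) * (((k:ℤ) + 4) * ((z:ℤ) - 2)) :=
            mul_nonneg (by linarith) (by nlinarith)
          nlinarith [p1, p2, h', hk0]
      -- bounds on y and z
      have hxz2 : 2 ≤ x * z := by
        have h1 : x ≤ x * z := Nat.le_mul_of_pos_right x hz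
        have h2 : z ≤ x * z := Nat.le_mul_of_pos_left z hx
        rcases Nat.lt_or_ge (x * z) 2 with hlt | hge
        · exfalso
          have hx1 : x = 1 := by omega
          have hz1 : z = 1 := by omega
          subst hx1; subst hz1; simp at h; omega
        · exact hge
      have hy10 : y ≤ 10 := by
        have : y * (x * z) = x ^ 2 + y + 1 := by rw [← h]; ring
        nlinarith [this, hxz2, hx3]
      have hz21 : z ≤ 21 := by nlinarith [h, hx, hy, hx3, hy10]
      interval_cases x <;> interval_cases y <;> omega
    · rintro (⟨h1,h2,h3⟩|⟨h1,h2,h3⟩|⟨h1,h2,h3⟩|⟨h1,h2,h3⟩|⟨h1,h2,h3⟩|⟨h1,h2,h3⟩) <;>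
        subst h1 <;> subst h2 <;> subst h3 <;> norm_num
  rw [hset, Set.ncard_coe_finset]
  decide
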